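/- arXiv:2511.16226 — 7 statements merged into one kernel-verified Lean document; each statement's English description precedes it below -/
import Mathlib

section
/- Let γ' ∈ (0,1), let H be a real number with H(1 − √γ') ≥ 1, let τ ≥ 1 and t₀ be integers with t₀ ≥ max(4H, τ), and set α_t = H/(t + t₀) and β̃_{h,t} = α_h ∏_{l=h+1}^{t} (1 − α_l) (empty product equal to 1). Let Z > 0, C_M ≥ 0, and let (ξ_t)_{t≥τ} be a sequence of nonnegative reals with ξ_τ ≤ 2Z such that for every t ≥ τ: ξ_{t+1} ≤ ((τ + t₀)/(t + 1 + t₀))^H · ξ_τ + γ' ∑_{h=τ}^{t} β̃_{h,t} ξ_h + C_M/√(t + 1 + t₀). Then, with C_ξ = 2C_M/(1 − γ') and C'_ξ = 4Z(τ + t₀)/(1 − γ'), for every T ≥ τ: ξ_T ≤ C_ξ/√(T + t₀) + C'_ξ/(T + t₀). -/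
set_option maxHeartbeats 1000000

/-- Weighted-sum bound: if `g` satisfies a one-step decay compatible with the weights
`β̃_{h,t} = α_h ∏ (1-α_l)`, then `∑_{h=τ}^t β̃_{h,t} g h ≤ (H/(H-1)) g (t+1)`. -/
theorem sum_beta_le (H : ℝ) (t₀ τ : ℕ) (g : ℕ → ℝ)
    (hH1 : 1 < H)
    (hα : ∀ l : ℕ, 0 ≤ 1 - H / ((l:ℝ) + t₀))
    (hbase : H / ((τ:ℝ) + t₀) * g τ ≤ H/(H-1) * g (τ+1))
    (hstep : ∀ t, τ ≤ t → (1 - 1/((t:ℝ)+1+t₀)) * g (t+1) ≤ g (t+2)) :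
    ∀ t, τ ≤ t → ∑ h ∈ Finset.Icc τ t,
      ((H / ((h:ℝ) + t₀)) * ∏ l ∈ Finset.Icc (h+1) t, (1 - H / ((l:ℝ) + t₀))) * g h
      ≤ H/(H-1) * g (t+1) := by
  intro t ht
  induction t, ht using Nat.le_induction with
  | base =>
    rw [Finset.Icc_self, Finset.sum_singleton, Finset.Icc_eq_empty (by omega),
      Finset.prod_empty, mul_one]
    exact hbase
  | succ t ht IH =>
    rw [Finset.sum_Icc_succ_top (by omega : τ ≤ t+1),
      Finset.Icc_eq_empty (by omega : ¬ (t+1+1 ≤ t+1)), Finset.prod_empty, mul_one]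
    have hprod : ∀ h ∈ Finset.Icc τ t,
        ((H / ((h:ℝ) + t₀)) * ∏ l ∈ Finset.Icc (h+1) (t+1), (1 - H / ((l:ℝ) + t₀))) * g h
        = (((H / ((h:ℝ) + t₀)) * ∏ l ∈ Finset.Icc (h+1) t, (1 - H / ((l:ℝ) + t₀))) * g h)
            * (1 - H/(((t+1:ℕ):ℝ)+t₀)) := by
      intro h hh
      rw [Finset.prod_Icc_succ_top (by simp only [Finset.mem_Icc] at hh; omega : h+1 ≤ t+1)]
      ring
    rw [Finset.sum_congr rfl hprod, ← Finset.sum_mul]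
    have hy : (0:ℝ) < (t:ℝ)+1+t₀ := by positivity
    have hH0 : (0:ℝ) < H - 1 := by linarith
    have hKnn : 0 ≤ H/(H-1) := by positivity
    have hS := mul_le_mul_of_nonneg_right IH (hα (t+1))
    have hcast : ((t+1:ℕ):ℝ) = (t:ℝ)+1 := by push_cast; ring
    rw [hcast]
    have hid : H/(H-1) * g (t+1) * (1 - H/((t:ℝ)+1+t₀)) + H/((t:ℝ)+1+t₀) * g (t+1)
        = H/(H-1) * ((1 - 1/((t:ℝ)+1+t₀)) * g (t+1)) := by
      field_simp
      ring
    calc (∑ h ∈ Finset.Icc τ t,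
          ((H / ((h:ℝ) + t₀)) * ∏ l ∈ Finset.Icc (h+1) t, (1 - H / ((l:ℝ) + t₀))) * g h)
            * (1 - H/((t:ℝ)+1+t₀)) + H/((t:ℝ)+1+t₀) * g (t+1)
        ≤ H/(H-1) * g (t+1) * (1 - H/((t:ℝ)+1+t₀)) + H/((t:ℝ)+1+t₀) * g (t+1) := by
          have := hα (t+1)
          rw [hcast] at this hS
          linarith
      _ = H/(H-1) * ((1 - 1/((t:ℝ)+1+t₀)) * g (t+1)) := hid
      _ ≤ H/(H-1) * g (t+2) := mul_le_mul_of_nonneg_left (hstep t ht) hKnn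

/-- Deterministic induction at the core of the finite-time convergence theorem for
SOR minimax Q-learning. Here `α_t = H/(t+t₀)`,
`β̃_{h,t} = α_h ∏_{l=h+1}^{t} (1 - α_l)` (empty products equal 1), and `ξ_t` is the
error sequence; `^ H` denotes the real power `Real.rpow`. -/
theorem stmt_1 (γ' H Z C_M : ℝ) (τ t₀ : ℕ)
    (hγ' : γ' ∈ Set.Ioo (0 : ℝ) 1)
    (hH : 1 ≤ H * (1 - Real.sqrt γ'))
    (hτ : 1 ≤ τ)
    (ht₀ : max (4 * H) (τ : ℝ) ≤ (t₀ : ℝ))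
    (hZ : 0 < Z) (hCM : 0 ≤ C_M)
    (ξ : ℕ → ℝ) (hξnn : ∀ t, 0 ≤ ξ t) (hξτ : ξ τ ≤ 2 * Z)
    (hrec : ∀ t, τ ≤ t →
      ξ (t + 1) ≤
        (((τ : ℝ) + t₀) / ((t : ℝ) + 1 + t₀)) ^ H * ξ τ
        + γ' * ∑ h ∈ Finset.Icc τ t,
            ((H / ((h : ℝ) + t₀)) * ∏ l ∈ Finset.Icc (h + 1) t, (1 - H / ((l : ℝ) + t₀))) * ξ h
        + C_M / Real.sqrt ((t : ℝ) + 1 + t₀)) :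
    ∀ T, τ ≤ T →
      ξ T ≤ (2 * C_M / (1 - γ')) / Real.sqrt ((T : ℝ) + t₀)
            + (4 * Z * ((τ : ℝ) + t₀) / (1 - γ')) / ((T : ℝ) + t₀) := by
  obtain ⟨hγ0, hγ1⟩ := hγ'
  have hs0 : 0 < Real.sqrt γ' := Real.sqrt_pos.mpr hγ0
  have hs2 : Real.sqrt γ' ^ 2 = γ' := Real.sq_sqrt hγ0.le
  have hs1 : Real.sqrt γ' < 1 := by nlinarith
  have hH1 : 1 < H := by nlinarith
  have h4H : 4*H ≤ (t₀:ℝ) := le_trans (le_max_left _ _) ht₀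
  have hτt₀ : (τ:ℝ) ≤ t₀ := le_trans (le_max_right _ _) ht₀
  have hτ1 : (1:ℝ) ≤ (τ:ℝ) := by exact_mod_cast hτ
  have ht₀1 : (1:ℝ) ≤ (t₀:ℝ) := le_trans hτ1 hτt₀
  have h1γ : (0:ℝ) < 1 - γ' := by linarith
  have hH0 : (0:ℝ) < H - 1 := by linarith
  have hc : (0:ℝ) < (τ:ℝ) + t₀ := by linarith
  have hc4 : 4*H ≤ (τ:ℝ) + t₀ := by linarith
  have hK1 : (1:ℝ) ≤ H/(H-1) := by rw [le_div_iff₀ hH0]; linarith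
  have hKnn : (0:ℝ) ≤ H/(H-1) := by linarith
  have hα : ∀ l : ℕ, 0 ≤ 1 - H / ((l:ℝ) + t₀) := by
    intro l
    have hl : (0:ℝ) ≤ l := Nat.cast_nonneg l
    have hpos : (0:ℝ) < (l:ℝ) + t₀ := by linarith
    have : H / ((l:ℝ)+t₀) ≤ 1 := by
      rw [div_le_one hpos]; linarith
    linarith
  have hγK : γ' * (H/(H-1)) ≤ Real.sqrt γ' := by
    rw [← mul_div_assoc, div_le_iff₀ hH0]
    nlinarith [mul_le_mul_of_nonneg_left hH hs0.le]
  set Cξ : ℝ := 2 * C_M / (1 - γ') with hCξdef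
  set Cξ' : ℝ := 4 * Z * ((τ:ℝ) + t₀) / (1 - γ') with hCξ'def
  have hCξnn : 0 ≤ Cξ := div_nonneg (by linarith) h1γ.le
  have hCξ'nn : 0 ≤ Cξ' := div_nonneg (by positivity) h1γ.le
  have hCξeq : Cξ * (1 - γ') = 2 * C_M := div_mul_cancel₀ _ h1γ.ne'
  have hCξ'eq : Cξ' * (1 - γ') = 4 * Z * ((τ:ℝ) + t₀) := div_mul_cancel₀ _ h1γ.ne'
  have hcoef1 : C_M + Real.sqrt γ' * Cξ ≤ Cξ := by
    nlinarith [hs2, hs0.le, hs1, hCξeq, mul_nonneg hs0.le hCξnn]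
  have hcoef2 : 2*Z*((τ:ℝ)+t₀) + Real.sqrt γ' * Cξ' ≤ Cξ' := by
    nlinarith [hs2, hs0.le, hs1, hCξ'eq, mul_nonneg hs0.le hCξ'nn, mul_pos hZ hc]
  -- instantiate the weighted-sum lemma for g₁ h = 1/(h+t₀)
  have hbase1 : H / ((τ:ℝ) + t₀) * (1/((τ:ℝ)+t₀)) ≤ H/(H-1) * (1/(((τ+1:ℕ):ℝ)+t₀)) := by
    push_cast
    have h1 : (0:ℝ) < (τ:ℝ)+1+t₀ := by linarith
    rw [div_mul_div_comm, mul_one, mul_one_div, div_le_div_iff₀ (by positivity) h1]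
    calc H * ((τ:ℝ)+1+t₀) ≤ 1 * (((τ:ℝ)+t₀)*((τ:ℝ)+t₀)) := by
          nlinarith [mul_le_mul_of_nonneg_right hc4 (show (0:ℝ) ≤ (τ:ℝ)+1+t₀ by linarith)]
      _ ≤ H/(H-1) * (((τ:ℝ)+t₀)*((τ:ℝ)+t₀)) :=
          mul_le_mul_of_nonneg_right hK1 (by positivity)
  have hstep1 : ∀ t : ℕ, τ ≤ t →
      (1 - 1/((t:ℝ)+1+t₀)) * (1/(((t+1:ℕ):ℝ)+t₀)) ≤ 1/(((t+2:ℕ):ℝ)+t₀) := by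
    intro t ht
    push_cast
    have htn : (0:ℝ) ≤ (t:ℝ) := Nat.cast_nonneg t
    have hy0 : (0:ℝ) < (t:ℝ)+1+t₀ := by linarith
    have e : (1 - 1/((t:ℝ)+1+t₀)) * (1/((t:ℝ)+1+t₀))
        = ((t:ℝ)+t₀)/(((t:ℝ)+1+t₀)*((t:ℝ)+1+t₀)) := by
      rw [one_sub_div hy0.ne', div_mul_div_comm, mul_one]
      ring_nf
    rw [e, div_le_div_iff₀ (by positivity) (by linarith : (0:ℝ) < (t:ℝ)+2+t₀)]
    nlinarith
  have hsum1 := sum_beta_le H t₀ τ (fun h => 1/((h:ℝ)+t₀)) hH1 hα hbase1 hstep1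
  -- instantiate the weighted-sum lemma for g₂ h = 1/√(h+t₀)
  have hbase2 : H / ((τ:ℝ) + t₀) * (1/Real.sqrt ((τ:ℝ)+t₀))
      ≤ H/(H-1) * (1/Real.sqrt (((τ+1:ℕ):ℝ)+t₀)) := by
    push_cast
    have h1 : (0:ℝ) < (τ:ℝ)+1+t₀ := by linarith
    have ha0 : 0 < Real.sqrt ((τ:ℝ)+t₀) := Real.sqrt_pos.mpr hc
    have hb0 : 0 < Real.sqrt ((τ:ℝ)+1+t₀) := Real.sqrt_pos.mpr h1
    have hble : Real.sqrt ((τ:ℝ)+1+t₀) ≤ 2 * Real.sqrt ((τ:ℝ)+t₀) := by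
      have h2 : Real.sqrt ((τ:ℝ)+1+t₀) ≤ Real.sqrt (2^2*((τ:ℝ)+t₀)) :=
        Real.sqrt_le_sqrt (by nlinarith)
      rwa [Real.sqrt_mul (by positivity), Real.sqrt_sq (by norm_num)] at h2
    rw [div_mul_div_comm, mul_one, mul_one_div, div_le_div_iff₀ (by positivity) hb0]
    calc H * Real.sqrt ((τ:ℝ)+1+t₀) ≤ H * (2*Real.sqrt ((τ:ℝ)+t₀)) :=
          mul_le_mul_of_nonneg_left hble (by linarith)
      _ = (2*H) * Real.sqrt ((τ:ℝ)+t₀) := by ring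
      _ ≤ ((τ:ℝ)+t₀) * Real.sqrt ((τ:ℝ)+t₀) :=
          mul_le_mul_of_nonneg_right (by linarith) ha0.le
      _ = 1 * (((τ:ℝ)+t₀) * Real.sqrt ((τ:ℝ)+t₀)) := by ring
      _ ≤ H/(H-1) * (((τ:ℝ)+t₀) * Real.sqrt ((τ:ℝ)+t₀)) :=
          mul_le_mul_of_nonneg_right hK1 (by positivity)
  have hstep2 : ∀ t : ℕ, τ ≤ t → (1 - 1/((t:ℝ)+1+t₀)) * (1/Real.sqrt (((t+1:ℕ):ℝ)+t₀))
      ≤ 1/Real.sqrt (((t+2:ℕ):ℝ)+t₀) := by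
    intro t ht
    push_cast
    have htn : (0:ℝ) ≤ (t:ℝ) := Nat.cast_nonneg t
    have hy1 : (1:ℝ) ≤ (t:ℝ)+1+t₀ := by linarith
    have hy0 : (0:ℝ) < (t:ℝ)+1+t₀ := by linarith
    have ha0 : 0 < Real.sqrt ((t:ℝ)+1+t₀) := Real.sqrt_pos.mpr hy0
    have hb0 : 0 < Real.sqrt ((t:ℝ)+2+t₀) := Real.sqrt_pos.mpr (by linarith)
    have haa : Real.sqrt ((t:ℝ)+1+t₀) ^ 2 = (t:ℝ)+1+t₀ := Real.sq_sqrt hy0.le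
    have hbb : Real.sqrt ((t:ℝ)+2+t₀) ^ 2 = (t:ℝ)+2+t₀ := Real.sq_sqrt (by linarith)
    have key : ((t:ℝ)+t₀) * Real.sqrt ((t:ℝ)+2+t₀) ≤ ((t:ℝ)+1+t₀) * Real.sqrt ((t:ℝ)+1+t₀) := by
      have hsq : (((t:ℝ)+t₀) * Real.sqrt ((t:ℝ)+2+t₀))^2
          ≤ (((t:ℝ)+1+t₀) * Real.sqrt ((t:ℝ)+1+t₀))^2 := by
        rw [mul_pow, mul_pow, haa, hbb]; nlinarith
      have h1 : 0 ≤ ((t:ℝ)+t₀) * Real.sqrt ((t:ℝ)+2+t₀) := mul_nonneg (by linarith) hb0.le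
      nlinarith [mul_pos hy0 ha0]
    have e : (1 - 1/((t:ℝ)+1+t₀)) * (1/Real.sqrt ((t:ℝ)+1+t₀))
        = ((t:ℝ)+t₀)/(((t:ℝ)+1+t₀)*Real.sqrt ((t:ℝ)+1+t₀)) := by
      rw [one_sub_div hy0.ne', div_mul_div_comm, mul_one]
      ring_nf
    rw [e, div_le_div_iff₀ (by positivity) hb0, one_mul]
    exact key
  have hsum2 := sum_beta_le H t₀ τ (fun h => 1/Real.sqrt ((h:ℝ)+t₀)) hH1 hα hbase2 hstep2
  -- main induction
  have main : ∀ t, τ ≤ t → ∀ h, τ ≤ h → h ≤ t →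
      ξ h ≤ Cξ * (1/Real.sqrt ((h:ℝ)+t₀)) + Cξ' * (1/((h:ℝ)+t₀)) := by
    intro t ht
    induction t, ht using Nat.le_induction with
    | base =>
      intro h h1 h2
      have hhτ : h = τ := le_antisymm h2 h1
      subst hhτ
      have h2Z : 2*Z ≤ Cξ' * (1/((h:ℝ)+t₀)) := by
        rw [mul_one_div, le_div_iff₀ hc]
        nlinarith [hCξ'eq, mul_nonneg hCξ'nn hγ0.le, mul_pos hZ hc]
      have hpos : 0 ≤ Cξ * (1/Real.sqrt ((h:ℝ)+t₀)) := by positivity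
      linarith [hξτ]
    | succ t ht IH =>
      intro h h1 h2
      by_cases hcse : h ≤ t
      · exact IH h h1 hcse
      · have hht : h = t+1 := by omega
        subst hht
        have htn : (0:ℝ) ≤ (t:ℝ) := Nat.cast_nonneg t
        have hy0 : (0:ℝ) < (t:ℝ)+1+t₀ := by linarith
        have hsy0 : 0 < Real.sqrt ((t:ℝ)+1+t₀) := Real.sqrt_pos.mpr hy0
        have hu0 : (0:ℝ) ≤ 1/Real.sqrt ((t:ℝ)+1+t₀) := by positivity
        have hv0 : (0:ℝ) ≤ 1/((t:ℝ)+1+t₀) := by positivity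
        have hs1t := hsum1 t ht
        have hs2t := hsum2 t ht
        push_cast at hs1t hs2t ⊢
        have hBnn : ∀ x ∈ Finset.Icc τ t,
            0 ≤ (H / ((x:ℝ) + t₀)) * ∏ l ∈ Finset.Icc (x+1) t, (1 - H / ((l:ℝ) + t₀)) := by
          intro x hx
          apply mul_nonneg (div_nonneg (by linarith) (by positivity))
          exact Finset.prod_nonneg (fun l _ => hα l)
        have hsum_le : (∑ x ∈ Finset.Icc τ t,
              ((H / ((x:ℝ) + t₀)) * ∏ l ∈ Finset.Icc (x+1) t, (1 - H / ((l:ℝ) + t₀))) * ξ x)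
            ≤ Cξ * (H/(H-1) * (1/Real.sqrt ((t:ℝ)+1+t₀)))
              + Cξ' * (H/(H-1) * (1/((t:ℝ)+1+t₀))) := by
          calc (∑ x ∈ Finset.Icc τ t,
                ((H / ((x:ℝ) + t₀)) * ∏ l ∈ Finset.Icc (x+1) t, (1 - H / ((l:ℝ) + t₀))) * ξ x)
              ≤ ∑ x ∈ Finset.Icc τ t,
                ((H / ((x:ℝ) + t₀)) * ∏ l ∈ Finset.Icc (x+1) t, (1 - H / ((l:ℝ) + t₀)))
                  * (Cξ * (1/Real.sqrt ((x:ℝ)+t₀)) + Cξ' * (1/((x:ℝ)+t₀))) := by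
                apply Finset.sum_le_sum
                intro x hx
                have hx' := Finset.mem_Icc.mp hx
                exact mul_le_mul_of_nonneg_left (IH x hx'.1 hx'.2) (hBnn x hx)
            _ = Cξ * (∑ x ∈ Finset.Icc τ t,
                  ((H / ((x:ℝ) + t₀)) * ∏ l ∈ Finset.Icc (x+1) t, (1 - H / ((l:ℝ) + t₀)))
                    * (1/Real.sqrt ((x:ℝ)+t₀)))
                + Cξ' * (∑ x ∈ Finset.Icc τ t,
                  ((H / ((x:ℝ) + t₀)) * ∏ l ∈ Finset.Icc (x+1) t, (1 - H / ((l:ℝ) + t₀)))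
                    * (1/((x:ℝ)+t₀))) := by
                rw [Finset.mul_sum, Finset.mul_sum, ← Finset.sum_add_distrib]
                exact Finset.sum_congr rfl (fun x _ => by ring)
            _ ≤ Cξ * (H/(H-1) * (1/Real.sqrt ((t:ℝ)+1+t₀)))
                + Cξ' * (H/(H-1) * (1/((t:ℝ)+1+t₀))) :=
                add_le_add (mul_le_mul_of_nonneg_left hs2t hCξnn)
                  (mul_le_mul_of_nonneg_left hs1t hCξ'nn)
        have hR0 : 0 < ((τ:ℝ)+t₀)/((t:ℝ)+1+t₀) := by positivity
        have hR1 : ((τ:ℝ)+t₀)/((t:ℝ)+1+t₀) ≤ 1 := by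
          rw [div_le_one hy0]
          have : (τ:ℝ) ≤ (t:ℝ) := by exact_mod_cast ht
          linarith
        have hRH : (((τ:ℝ)+t₀)/((t:ℝ)+1+t₀))^H ≤ ((τ:ℝ)+t₀)/((t:ℝ)+1+t₀) := by
          calc (((τ:ℝ)+t₀)/((t:ℝ)+1+t₀))^H ≤ (((τ:ℝ)+t₀)/((t:ℝ)+1+t₀))^(1:ℝ) :=
                Real.rpow_le_rpow_of_exponent_ge hR0 hR1 (by linarith)
            _ = ((τ:ℝ)+t₀)/((t:ℝ)+1+t₀) := Real.rpow_one _
        have hRξ : (((τ:ℝ)+t₀)/((t:ℝ)+1+t₀))^H * ξ τ ≤ (((τ:ℝ)+t₀)/((t:ℝ)+1+t₀)) * (2*Z) :=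
          mul_le_mul hRH hξτ (hξnn τ) hR0.le
        have hγS := mul_le_mul_of_nonneg_left hsum_le hγ0.le
        have hfinal := hrec t ht
        have e1 : (((τ:ℝ)+t₀)/((t:ℝ)+1+t₀)) * (2*Z) = (2*Z*((τ:ℝ)+t₀)) * (1/((t:ℝ)+1+t₀)) := by
          ring
        have e2 : γ' * (Cξ * (H/(H-1) * (1/Real.sqrt ((t:ℝ)+1+t₀)))
              + Cξ' * (H/(H-1) * (1/((t:ℝ)+1+t₀))))
            = (γ' * (H/(H-1))) * (Cξ * (1/Real.sqrt ((t:ℝ)+1+t₀)))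
              + (γ' * (H/(H-1))) * (Cξ' * (1/((t:ℝ)+1+t₀))) := by ring
        have h3 : (γ' * (H/(H-1))) * (Cξ * (1/Real.sqrt ((t:ℝ)+1+t₀)))
            ≤ Real.sqrt γ' * (Cξ * (1/Real.sqrt ((t:ℝ)+1+t₀))) :=
          mul_le_mul_of_nonneg_right hγK (mul_nonneg hCξnn hu0)
        have h4 : (γ' * (H/(H-1))) * (Cξ' * (1/((t:ℝ)+1+t₀)))
            ≤ Real.sqrt γ' * (Cξ' * (1/((t:ℝ)+1+t₀))) :=
          mul_le_mul_of_nonneg_right hγK (mul_nonneg hCξ'nn hv0)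
        have h5 : 0 ≤ (Cξ - Real.sqrt γ' * Cξ - C_M) * (1/Real.sqrt ((t:ℝ)+1+t₀)) :=
          mul_nonneg (by linarith) hu0
        have h6 : 0 ≤ (Cξ' - Real.sqrt γ' * Cξ' - 2*Z*((τ:ℝ)+t₀)) * (1/((t:ℝ)+1+t₀)) :=
          mul_nonneg (by linarith) hv0
        have e3 : C_M / Real.sqrt ((t:ℝ)+1+t₀) = C_M * (1/Real.sqrt ((t:ℝ)+1+t₀)) := by ring
        calc ξ (t+1) ≤ (((τ:ℝ)+t₀)/((t:ℝ)+1+t₀))^H * ξ τ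
              + γ' * ∑ x ∈ Finset.Icc τ t,
                  ((H / ((x:ℝ) + t₀)) * ∏ l ∈ Finset.Icc (x+1) t, (1 - H / ((l:ℝ) + t₀))) * ξ x
              + C_M / Real.sqrt ((t:ℝ)+1+t₀) := hfinal
          _ ≤ (((τ:ℝ)+t₀)/((t:ℝ)+1+t₀)) * (2*Z)
              + γ' * (Cξ * (H/(H-1) * (1/Real.sqrt ((t:ℝ)+1+t₀)))
                + Cξ' * (H/(H-1) * (1/((t:ℝ)+1+t₀))))
              + C_M / Real.sqrt ((t:ℝ)+1+t₀) := by
              exact add_le_add (add_le_add hRξ hγS) le_rfl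
          _ ≤ Cξ * (1/Real.sqrt ((t:ℝ)+1+t₀)) + Cξ' * (1/((t:ℝ)+1+t₀)) := by
              rw [e1, e2, e3]
              linarith [h3, h4, h5, h6]
  intro T hT
  have h := main T hT T hT le_rfl
  rw [mul_one_div, mul_one_div] at h
  exact h
end

section
/- Let d ≥ 1 and equip ℝ^d with the sup norm ‖x‖ = max_i |x_i|. Let γ' ∈ (0,1) and let F : ℝ^d → ℝ^d satisfy ‖F(x) − F(y)‖ ≤ γ'‖x − y‖ for all x, y, with fixed point θ* (F(θ*) = θ*). Let τ ≥ 0 be an integer, let (α_t)_{t≥τ} be reals in [0,1], and let (θ_t)_{t≥τ}, (M_t)_{t≥τ} be sequences in ℝ^d satisfying θ_{t+1} = (1 − α_t)θ_t + α_t(F(θ_t) + M_t) for all t ≥ τ. Set ξ_t = ‖θ_t − θ*‖, β_{τ−1,t} = ∏_{h=τ}^{t}(1 − α_h), and β̃_{h,t} = α_h ∏_{l=h+1}^{t}(1 − α_l) (empty product equal to 1). Then for every t ≥ τ: ξ_{t+1} ≤ β_{τ−1,t} ξ_τ + γ' ∑_{h=τ}^{t} β̃_{h,t} ξ_h + ‖∑_{h=τ}^{t}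 β̃_{h,t} M_h‖. -/
/-- Error-decomposition lemma (Lemma 1) for the SOR minimax Q-learning recursion.
`ℝ^d` carries the sup norm (`Fin d → ℝ` with the Pi norm). -/
theorem stmt_2 (d : ℕ) (hd : 1 ≤ d) (γ' : ℝ) (hγ' : γ' ∈ Set.Ioo (0 : ℝ) 1)
    (F : (Fin d → ℝ) → (Fin d → ℝ))
    (hF : ∀ x y : Fin d → ℝ, ‖F x - F y‖ ≤ γ' * ‖x - y‖)
    (θstar : Fin d → ℝ) (hfix : F θstar = θstar)
    (τ : ℕ) (α : ℕ → ℝ) (hα : ∀ t, τ ≤ t → α t ∈ Set.Icc (0 : ℝ) 1)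
    (θ M : ℕ → Fin d → ℝ)
    (hrec : ∀ t, τ ≤ t → θ (t + 1) = (1 - α t) • θ t + α t • (F (θ t) + M t)) :
    ∀ t, τ ≤ t →
      ‖θ (t + 1) - θstar‖ ≤
        (∏ h ∈ Finset.Icc τ t, (1 - α h)) * ‖θ τ - θstar‖
        + γ' * ∑ h ∈ Finset.Icc τ t,
            (α h * ∏ l ∈ Finset.Icc (h + 1) t, (1 - α l)) * ‖θ h - θstar‖
        + ‖∑ h ∈ Finset.Icc τ t, (α h * ∏ l ∈ Finset.Icc (h + 1) t, (1 - α l)) • M h‖ := by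
  set S : ℕ → Fin d → ℝ := fun t =>
    ∑ h ∈ Finset.Icc τ t, (α h * ∏ l ∈ Finset.Icc (h + 1) t, (1 - α l)) • M h with hS
  have key : ∀ t, τ ≤ t →
      ‖θ (t + 1) - θstar - S t‖ ≤
        (∏ h ∈ Finset.Icc τ t, (1 - α h)) * ‖θ τ - θstar‖
        + γ' * ∑ h ∈ Finset.Icc τ t,
            (α h * ∏ l ∈ Finset.Icc (h + 1) t, (1 - α l)) * ‖θ h - θstar‖ := by
    intro t ht
    induction t, ht using Nat.le_induction with
    | base =>
      have hα0 := hα τ le_rfl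
      have hbase : θ (τ + 1) - θstar - S τ
          = (1 - α τ) • (θ τ - θstar) + α τ • (F (θ τ) - F θstar) := by
        simp only [hS, Finset.Icc_self, Finset.sum_singleton, Finset.Icc_eq_empty_of_lt
          (Nat.lt_succ_self τ), Finset.prod_empty, mul_one, hrec τ le_rfl, hfix]
        module
      rw [hbase]
      simp only [Finset.Icc_self, Finset.prod_singleton, Finset.sum_singleton,
        Finset.Icc_eq_empty_of_lt (Nat.lt_succ_self τ), Finset.prod_empty, mul_one]
      calc ‖(1 - α τ) • (θ τ - θstar) + α τ • (F (θ τ) - F θstar)‖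
          ≤ ‖(1 - α τ) • (θ τ - θstar)‖ + ‖α τ • (F (θ τ) - F θstar)‖ := norm_add_le _ _
        _ ≤ (1 - α τ) * ‖θ τ - θstar‖ + α τ * (γ' * ‖θ τ - θstar‖) := by
            rw [norm_smul, norm_smul, Real.norm_of_nonneg (by linarith [hα0.2]),
              Real.norm_of_nonneg hα0.1]
            have h2 := mul_le_mul_of_nonneg_left (hF (θ τ) θstar) hα0.1
            linarith
        _ = (1 - α τ) * ‖θ τ - θstar‖ + γ' * (α τ * ‖θ τ - θstar‖) := by ring
    | succ t ht ih =>
      have hαt := hα (t + 1) (le_trans ht (Nat.le_succ t))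
      have hSstep : S (t + 1) = (1 - α (t + 1)) • S t + α (t + 1) • M (t + 1) := by
        simp only [hS]
        rw [Finset.sum_Icc_succ_top (le_trans ht (Nat.le_succ t)),
          Finset.Icc_eq_empty_of_lt (Nat.lt_succ_self (t + 1)), Finset.prod_empty, mul_one,
          Finset.smul_sum]
        congr 1
        apply Finset.sum_congr rfl
        intro h hh
        rw [Finset.mem_Icc] at hh
        rw [smul_smul, Finset.prod_Icc_succ_top (Nat.succ_le_succ hh.2)]
        congr 1
        ring
      have hrec' := hrec (t + 1) (le_trans ht (Nat.le_succ t))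
      have halg : θ (t + 2) - θstar - S (t + 1)
          = (1 - α (t + 1)) • (θ (t + 1) - θstar - S t)
            + α (t + 1) • (F (θ (t + 1)) - F θstar) := by
        rw [hSstep, hrec', hfix]; module
      have hβ : (∏ h ∈ Finset.Icc τ (t + 1), (1 - α h))
          = (1 - α (t + 1)) * ∏ h ∈ Finset.Icc τ t, (1 - α h) := by
        rw [Finset.prod_Icc_succ_top (le_trans ht (Nat.le_succ t))]; ring
      have hsum : (∑ h ∈ Finset.Icc τ (t + 1),
            (α h * ∏ l ∈ Finset.Icc (h + 1) (t + 1), (1 - α l)) * ‖θ h - θstar‖)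
          = (1 - α (t + 1)) * (∑ h ∈ Finset.Icc τ t,
              (α h * ∏ l ∈ Finset.Icc (h + 1) t, (1 - α l)) * ‖θ h - θstar‖)
            + α (t + 1) * ‖θ (t + 1) - θstar‖ := by
        rw [Finset.sum_Icc_succ_top (le_trans ht (Nat.le_succ t)),
          Finset.Icc_eq_empty_of_lt (Nat.lt_succ_self (t + 1)), Finset.prod_empty, mul_one,
          Finset.mul_sum]
        congr 1
        apply Finset.sum_congr rfl
        intro h hh
        rw [Finset.mem_Icc] at hh
        rw [Finset.prod_Icc_succ_top (Nat.succ_le_succ hh.2)]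
        ring
      rw [hβ, hsum, halg]
      have h1 : (0:ℝ) ≤ 1 - α (t + 1) := by linarith [hαt.2]
      calc ‖(1 - α (t + 1)) • (θ (t + 1) - θstar - S t)
            + α (t + 1) • (F (θ (t + 1)) - F θstar)‖
          ≤ (1 - α (t + 1)) * ‖θ (t + 1) - θstar - S t‖
            + α (t + 1) * (γ' * ‖θ (t + 1) - θstar‖) := by
            refine le_trans (norm_add_le _ _) ?_
            rw [norm_smul, norm_smul, Real.norm_of_nonneg h1, Real.norm_of_nonneg hαt.1]
            have h2 := mul_le_mul_of_nonneg_left (hF (θ (t + 1)) θstar) hαt.1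
            linarith
        _ ≤ (1 - α (t + 1)) * ((∏ h ∈ Finset.Icc τ t, (1 - α h)) * ‖θ τ - θstar‖
              + γ' * ∑ h ∈ Finset.Icc τ t,
                  (α h * ∏ l ∈ Finset.Icc (h + 1) t, (1 - α l)) * ‖θ h - θstar‖)
            + α (t + 1) * (γ' * ‖θ (t + 1) - θstar‖) := by gcongr
        _ = (1 - α (t + 1)) * (∏ h ∈ Finset.Icc τ t, (1 - α h)) * ‖θ τ - θstar‖
            + γ' * ((1 - α (t + 1)) * (∑ h ∈ Finset.Icc τ t,
                (α h * ∏ l ∈ Finset.Icc (h + 1) t, (1 - α l)) * ‖θ h - θstar‖)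
              + α (t + 1) * ‖θ (t + 1) - θstar‖) := by ring
  intro t ht
  calc ‖θ (t + 1) - θstar‖ ≤ ‖θ (t + 1) - θstar - S t‖ + ‖S t‖ := by
        have := norm_add_le (θ (t + 1) - θstar - S t) (S t)
        simpa using this
    _ ≤ _ := by
        have := key t ht
        rw [hS]
        linarith
end

section
/- Let H > 0 and t₀ ≥ 4H be real numbers, set α_l = H/(l + t₀) for integers l ≥ 0, and define β̃_{h,t} = α_h ∏_{l=h+1}^{t}(1 − α_l) (empty product equal to 1). Then for all integers 0 ≤ h ≤ t: β̃_{h,t} ≤ (H/(h + t₀)) · ((h + 1 + t₀)/(t + 1 + t₀))^H. -/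
open Finset

lemma key_ineq (H x : ℝ) (hH : 0 < H) (hx : H < x) :
    1 - H / x ≤ (x / (x + 1)) ^ H := by
  have hx0 : 0 < x := hH.trans hx
  have hx1 : (0:ℝ) < x + 1 := by linarith
  have h1 : 0 < 1 - H / x := by
    rw [sub_pos, div_lt_one hx0]; exact hx
  have hb : 0 < x / (x + 1) := div_pos hx0 hx1
  have hrp : 0 < (x / (x + 1)) ^ H := Real.rpow_pos_of_pos hb H
  rw [← Real.exp_log h1, ← Real.exp_log hrp, Real.exp_le_exp, Real.log_rpow hb]
  -- log (1 - H/x) ≤ H * log (x/(x+1))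
  have l1 : Real.log (1 - H / x) ≤ -(H / x) := by
    have := Real.log_le_sub_one_of_pos h1
    linarith
  have l2 : Real.log ((x + 1) / x) ≤ 1 / x := by
    have hpos : 0 < (x + 1) / x := div_pos hx1 hx0
    have := Real.log_le_sub_one_of_pos hpos
    have : (x + 1) / x - 1 = 1 / x := by field_simp; ring
    have h2 := Real.log_le_sub_one_of_pos hpos
    linarith [h2, this ▸ h2]
  have l3 : Real.log (x / (x + 1)) = -Real.log ((x + 1) / x) := by
    rw [← Real.log_inv]; congr 1; field_simp
  have : -(H / x) ≤ H * Real.log (x / (x + 1)) := by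
    rw [l3]
    have := mul_le_mul_of_nonneg_left l2 hH.le
    rw [mul_one_div] at this
    linarith
  linarith

lemma prod_bound (H t₀ : ℝ) (hH : 0 < H) (ht₀ : 4 * H ≤ t₀) :
    ∀ h t : ℕ, h ≤ t →
      ∏ l ∈ Finset.Icc (h + 1) t, (1 - H / ((l : ℝ) + t₀)) ≤
        (((h : ℝ) + 1 + t₀) / ((t : ℝ) + 1 + t₀)) ^ H := by
  have ht₀' : (0:ℝ) < t₀ := by linarith
  intro h t
  induction t with
  | zero =>
    intro hh
    interval_cases h
    rw [div_self (by positivity)]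
    simp
  | succ t ih =>
    intro hh
    rcases Nat.lt_or_ge t h with hlt | hle
    · -- h = t + 1
      have : h = t + 1 := by omega
      subst this
      rw [Finset.Icc_eq_empty (by omega)]
      rw [div_self (by positivity)]
      simp
    · have hstep : h + 1 ≤ t + 1 := by omega
      rw [Finset.prod_Icc_succ_top hstep]
      have hxH : H < (t:ℝ) + 1 + t₀ := by
        have : (0:ℝ) ≤ t := Nat.cast_nonneg t
        linarith
      have hkey : 1 - H / (((t+1 : ℕ) : ℝ) + t₀) ≤
          (((t:ℝ) + 1 + t₀) / (((t:ℝ) + 1 + t₀) + 1)) ^ H := by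
        push_cast
        exact key_ineq H ((t:ℝ) + 1 + t₀) hH hxH
      have hfac_nonneg : 0 ≤ 1 - H / (((t+1 : ℕ) : ℝ) + t₀) := by
        push_cast
        have : H / ((t:ℝ) + 1 + t₀) < 1 := by
          rw [div_lt_one (by linarith)]; exact hxH
        linarith
      have hprod_nonneg : 0 ≤ ∏ l ∈ Finset.Icc (h + 1) t, (1 - H / ((l : ℝ) + t₀)) := by
        apply Finset.prod_nonneg
        intro l hl
        have hl0 : (0:ℝ) ≤ l := Nat.cast_nonneg l
        have : H / ((l:ℝ) + t₀) ≤ 1 := by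
          rw [div_le_one (by linarith)]; linarith
        linarith
      have hrhs_nonneg : 0 ≤ (((h : ℝ) + 1 + t₀) / ((t : ℝ) + 1 + t₀)) ^ H :=
        (Real.rpow_pos_of_pos (div_pos (by positivity) (by linarith)) H).le
      calc (∏ l ∈ Finset.Icc (h + 1) t, (1 - H / ((l : ℝ) + t₀))) *
              (1 - H / (((t+1 : ℕ) : ℝ) + t₀))
          ≤ (((h : ℝ) + 1 + t₀) / ((t : ℝ) + 1 + t₀)) ^ H *
              ((((t:ℝ) + 1 + t₀) / (((t:ℝ) + 1 + t₀) + 1)) ^ H) := by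
            apply mul_le_mul (ih hle) hkey hfac_nonneg hrhs_nonneg
        _ = (((h : ℝ) + 1 + t₀) / (((t+1 : ℕ) : ℝ) + 1 + t₀)) ^ H := by
            rw [← Real.mul_rpow (by positivity) (by positivity)]
            congr 1
            push_cast
            have h1 : ((t:ℝ) + 1 + t₀) ≠ 0 := by positivity
            have h2 : ((t:ℝ) + 1 + t₀ + 1) ≠ 0 := by positivity
            rw [div_mul_div_comm, mul_comm ((h:ℝ) + 1 + t₀), mul_div_mul_left _ _ h1]
            ring_nf

/-- Lemma 2, part 1 (second claim): bound on the recursion weights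
`β̃_{h,t} = α_h ∏_{l=h+1}^{t} (1 - α_l)` with step sizes `α_l = H / (l + t₀)`.
Here `^` on the right is the real power `Real.rpow`. -/
theorem stmt_5 (H t₀ : ℝ) (hH : 0 < H) (ht₀ : 4 * H ≤ t₀) :
    ∀ h t : ℕ, h ≤ t →
      (H / ((h : ℝ) + t₀)) * ∏ l ∈ Finset.Icc (h + 1) t, (1 - H / ((l : ℝ) + t₀)) ≤
        (H / ((h : ℝ) + t₀)) * ((((h : ℝ) + 1 + t₀) / ((t : ℝ) + 1 + t₀)) ^ H) := by
  intro h t hht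
  apply mul_le_mul_of_nonneg_left (prod_bound H t₀ hH ht₀ h t hht)
  have : (0:ℝ) ≤ h := Nat.cast_nonneg h
  apply div_nonneg hH.le
  linarith
end

section
/- Let H > 1 and t₀ ≥ 4H be real numbers, set α_l = H/(l + t₀) for integers l ≥ 0, and define β̃_{h,t} = α_h ∏_{l=h+1}^{t}(1 − α_l) (empty product equal to 1). Then for every integer t ≥ 1: ∑_{h=1}^{t} β̃_{h,t}² ≤ 2H/(t + 1 + t₀). -/
/-- Lemma 2, part 2: sum-of-squares bound on the recursion weights
`β̃_{h,t} = α_h ∏_{l=h+1}^{t} (1 - α_l)` with step sizes `α_l = H / (l + t₀)`. -/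
theorem stmt_6 (H t₀ : ℝ) (hH : 1 < H) (ht₀ : 4 * H ≤ t₀) :
    ∀ t : ℕ, 1 ≤ t →
      ∑ h ∈ Finset.Icc 1 t,
          ((H / ((h : ℝ) + t₀)) * ∏ l ∈ Finset.Icc (h + 1) t, (1 - H / ((l : ℝ) + t₀))) ^ 2 ≤
        2 * H / ((t : ℝ) + 1 + t₀) := by
  have hH0 : (0:ℝ) < H := by linarith
  have ht₀4 : (4:ℝ) ≤ t₀ := by nlinarith
  intro t ht
  induction t, ht using Nat.le_induction with
  | base =>
    simp only [Finset.Icc_self, Finset.sum_singleton, Nat.cast_one]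
    have h1 : Finset.Icc 2 1 = (∅ : Finset ℕ) := by decide
    rw [h1, Finset.prod_empty, mul_one, div_pow, div_le_div_iff₀ (by nlinarith) (by nlinarith)]
    nlinarith [sq_nonneg t₀, sq_nonneg (t₀ - 4*H)]
  | succ t ht ih =>
    set x : ℝ := (t:ℝ) + 1 + t₀ with hxdef
    have hx4 : 4 * H ≤ x := by
      have : (1:ℝ) ≤ (t:ℝ) := by exact_mod_cast ht
      nlinarith
    have hx0 : (0:ℝ) < x := by nlinarith
    rw [Finset.sum_Icc_succ_top (by omega : 1 ≤ t + 1)]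
    have hcast : ((t + 1 : ℕ) : ℝ) = (t:ℝ) + 1 := by push_cast; ring
    have hprod : ∀ h ∈ Finset.Icc 1 t,
        ((H / ((h : ℝ) + t₀)) * ∏ l ∈ Finset.Icc (h + 1) (t + 1), (1 - H / ((l : ℝ) + t₀))) ^ 2
        = ((H / ((h : ℝ) + t₀)) * ∏ l ∈ Finset.Icc (h + 1) t, (1 - H / ((l : ℝ) + t₀))) ^ 2
          * (1 - H / x) ^ 2 := by
      intro h hh
      simp only [Finset.mem_Icc] at hh
      rw [Finset.prod_Icc_succ_top (by omega : h + 1 ≤ t + 1), hcast, ← hxdef]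
      ring
    rw [Finset.sum_congr rfl hprod, ← Finset.sum_mul]
    have hempty : Finset.Icc (t + 1 + 1) (t + 1) = (∅ : Finset ℕ) := by
      apply Finset.Icc_eq_empty; omega
    rw [hempty, Finset.prod_empty, mul_one, hcast, ← hxdef]
    have hsq : (0:ℝ) ≤ (1 - H / x) ^ 2 := sq_nonneg _
    have step1 : (∑ h ∈ Finset.Icc 1 t,
        ((H / ((h : ℝ) + t₀)) * ∏ l ∈ Finset.Icc (h + 1) t, (1 - H / ((l : ℝ) + t₀))) ^ 2)
          * (1 - H / x) ^ 2 + (H / x) ^ 2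
        ≤ (2 * H / x) * (1 - H / x) ^ 2 + (H / x) ^ 2 := by
      have := mul_le_mul_of_nonneg_right ih hsq
      linarith
    refine step1.trans ?_
    have hgoal : ((t:ℝ) + 1 + 1 + t₀) = x + 1 := by rw [hxdef]; ring
    rw [hgoal]
    have h1 : 2 * H / x * (1 - H / x) ^ 2 + (H / x) ^ 2
        = (2 * H * (x - H) ^ 2 + H ^ 2 * x) / x ^ 3 := by
      field_simp
    rw [h1, div_le_div_iff₀ (by positivity) (by positivity)]
    nlinarith [mul_nonneg (mul_nonneg (by linarith : (0:ℝ) ≤ x - 4*H) hH0.le) hx0.le,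
      mul_nonneg (by linarith : (0:ℝ) ≤ H - 1) (sq_nonneg x),
      sq_nonneg (x - 4*H), mul_pos hx0 hx0, sq_nonneg x, mul_pos hH0 hx0]
end

section
/- Let γ' ∈ (0,1), H(1 − √γ') ≥ 1, 0 < Γ ≤ 1, let τ ≥ 0 and t₀ ≥ max(2H, 1) with t₀ a real and τ an integer, set α_l = H/(l + t₀), and define β̃_{h,t} = α_h ∏_{l=h+1}^{t}(1 − α_l) (empty product equal to 1). Then for every integer t ≥ τ: ∑_{h=τ}^{t} β̃_{h,t} · (h + t₀)^{−Γ} ≤ 1/(√γ' · (t + 1 + t₀)^Γ). -/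
/-- Lemma 3: bound on weighted sums of inverse powers with the recursion weights
`β̃_{h,t} = α_h ∏_{l=h+1}^{t} (1 - α_l)` induced by step sizes `α_l = H / (l + t₀)`.
Here `^` is the real power `Real.rpow`. -/
theorem stmt_8 (γ' H Γ t₀ : ℝ) (τ : ℕ)
    (hγ' : γ' ∈ Set.Ioo (0 : ℝ) 1)
    (hH : 1 ≤ H * (1 - Real.sqrt γ'))
    (hΓ : Γ ∈ Set.Ioc (0 : ℝ) 1)
    (ht₀ : max (2 * H) 1 ≤ t₀) :
    ∀ t : ℕ, τ ≤ t →
      ∑ h ∈ Finset.Icc τ t,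
          ((H / ((h : ℝ) + t₀)) * ∏ l ∈ Finset.Icc (h + 1) t, (1 - H / ((l : ℝ) + t₀)))
            * ((h : ℝ) + t₀) ^ (-Γ) ≤
        1 / (Real.sqrt γ' * ((t : ℝ) + 1 + t₀) ^ Γ) := by
  obtain ⟨hγ0, hγ1⟩ := hγ'
  obtain ⟨hΓ0, hΓ1⟩ := hΓ
  set s := Real.sqrt γ' with hsdef
  have hs0 : 0 < s := Real.sqrt_pos.mpr hγ0
  have hs1 : s < 1 := by
    have := Real.sqrt_lt_sqrt hγ0.le hγ1
    simpa using this
  have hH1 : 1 ≤ H := by nlinarith [hH, hs0, hs1]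
  have ht₀1 : 1 ≤ t₀ := le_trans (le_max_right _ _) ht₀
  have ht₀H : 2 * H ≤ t₀ := le_trans (le_max_left _ _) ht₀
  intro t ht
  induction t, ht using Nat.le_induction with
  | base =>
    have hτ0 : (0:ℝ) ≤ (τ:ℝ) := Nat.cast_nonneg τ
    have hx1 : 1 ≤ (τ:ℝ) + t₀ := by linarith
    have hx0 : 0 < (τ:ℝ) + t₀ := by linarith
    have hx2H : 2 * H ≤ (τ:ℝ) + t₀ := by linarith
    have hA : 0 < ((τ:ℝ) + t₀) ^ Γ := Real.rpow_pos_of_pos hx0 _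
    have hB : 0 < ((τ:ℝ) + 1 + t₀) ^ Γ := Real.rpow_pos_of_pos (by linarith) _
    have hB2A : ((τ:ℝ) + 1 + t₀) ^ Γ ≤ 2 * ((τ:ℝ) + t₀) ^ Γ := by
      have h2 : ((τ:ℝ) + 1 + t₀) ^ Γ ≤ (2 * ((τ:ℝ) + t₀)) ^ Γ :=
        Real.rpow_le_rpow (by linarith) (by linarith) hΓ0.le
      have h3 : (2 * ((τ:ℝ) + t₀)) ^ Γ = (2:ℝ) ^ Γ * ((τ:ℝ) + t₀) ^ Γ :=
        Real.mul_rpow (by norm_num) hx0.le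
      have h4 : (2:ℝ) ^ Γ ≤ (2:ℝ) ^ (1:ℝ) :=
        Real.rpow_le_rpow_of_exponent_le one_le_two hΓ1
      rw [Real.rpow_one] at h4
      calc ((τ:ℝ) + 1 + t₀) ^ Γ ≤ (2:ℝ) ^ Γ * ((τ:ℝ) + t₀) ^ Γ := by rw [← h3]; exact h2
        _ ≤ 2 * ((τ:ℝ) + t₀) ^ Γ := by nlinarith [hA]
    simp only [Finset.Icc_self, Finset.sum_singleton]
    rw [Finset.Icc_eq_empty (by omega), Finset.prod_empty, mul_one,
      Real.rpow_neg hx0.le]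
    have hLHS : H / ((τ:ℝ) + t₀) * (((τ:ℝ) + t₀) ^ Γ)⁻¹
        = H / (((τ:ℝ) + t₀) * ((τ:ℝ) + t₀) ^ Γ) := by
      field_simp
    rw [hLHS, div_le_div_iff₀ (by positivity) (by positivity)]
    -- H * (s * B) ≤ 1 * (x * A)
    nlinarith [mul_le_mul_of_nonneg_left hB2A (by linarith : (0:ℝ) ≤ H),
      mul_le_mul_of_nonneg_right hx2H hA.le,
      mul_le_mul_of_nonneg_left hs1.le
        (mul_pos (show (0:ℝ) < H by linarith) hB).le]
  | succ t ht ih =>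
    have ht0 : (0:ℝ) ≤ (t:ℝ) := Nat.cast_nonneg t
    have hx1 : 1 ≤ (t:ℝ) + 1 + t₀ := by linarith
    have hx0 : 0 < (t:ℝ) + 1 + t₀ := by linarith
    have hx2H : 2 * H ≤ (t:ℝ) + 1 + t₀ := by linarith
    have hα : H / ((t:ℝ) + 1 + t₀) ≤ 1 / 2 := by
      rw [div_le_iff₀ hx0]; linarith
    have hα0 : 0 ≤ H / ((t:ℝ) + 1 + t₀) := by positivity
    have hA : 0 < ((t:ℝ) + 1 + t₀) ^ Γ := Real.rpow_pos_of_pos hx0 _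
    have hB : 0 < ((t:ℝ) + 1 + 1 + t₀) ^ Γ := Real.rpow_pos_of_pos (by linarith) _
    -- rewrite the sum via the recursion
    rw [Finset.sum_Icc_succ_top (le_trans ht (Nat.le_succ t))]
    have step : ∀ h ∈ Finset.Icc τ t,
        (H / ((h : ℝ) + t₀) * ∏ l ∈ Finset.Icc (h + 1) (t + 1), (1 - H / ((l : ℝ) + t₀)))
            * ((h : ℝ) + t₀) ^ (-Γ)
        = (1 - H / ((t:ℝ) + 1 + t₀)) *
          ((H / ((h : ℝ) + t₀) * ∏ l ∈ Finset.Icc (h + 1) t, (1 - H / ((l : ℝ) + t₀)))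
            * ((h : ℝ) + t₀) ^ (-Γ)) := by
      intro h hh
      have hht : h ≤ t := (Finset.mem_Icc.mp hh).2
      rw [Finset.prod_Icc_succ_top (by omega : h + 1 ≤ t + 1)]
      push_cast
      ring
    rw [Finset.sum_congr rfl step, ← Finset.mul_sum]
    -- term at t+1 has empty product
    rw [Finset.Icc_eq_empty (by omega : ¬ (t + 1 + 1 ≤ t + 1)), Finset.prod_empty, mul_one]
    push_cast
    -- key inequality
    have h1 : 1 - H / ((t:ℝ) + 1 + t₀) * (1 - s)
        ≤ ((t:ℝ) + 1 + t₀) / ((t:ℝ) + 1 + 1 + t₀) := by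
      have e : 1 - H / ((t:ℝ) + 1 + t₀) * (1 - s)
          = (((t:ℝ) + 1 + t₀) - H * (1 - s)) / ((t:ℝ) + 1 + t₀) := by
        field_simp
      rw [e, div_le_div_iff₀ hx0 (by linarith)]
      nlinarith [mul_nonneg (sub_nonneg.mpr hH) (show (0:ℝ) ≤ (t:ℝ) + 1 + 1 + t₀ by linarith)]
    have h2 : ((t:ℝ) + 1 + t₀) / ((t:ℝ) + 1 + 1 + t₀)
        ≤ ((t:ℝ) + 1 + t₀) ^ Γ / ((t:ℝ) + 1 + 1 + t₀) ^ Γ := by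
      have hb0 : 0 < ((t:ℝ) + 1 + t₀) / ((t:ℝ) + 1 + 1 + t₀) := by positivity
      have hb1 : ((t:ℝ) + 1 + t₀) / ((t:ℝ) + 1 + 1 + t₀) ≤ 1 := by
        rw [div_le_one (by linarith)]; linarith
      calc ((t:ℝ) + 1 + t₀) / ((t:ℝ) + 1 + 1 + t₀)
          = (((t:ℝ) + 1 + t₀) / ((t:ℝ) + 1 + 1 + t₀)) ^ (1:ℝ) := (Real.rpow_one _).symm
        _ ≤ (((t:ℝ) + 1 + t₀) / ((t:ℝ) + 1 + 1 + t₀)) ^ Γ :=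
            Real.rpow_le_rpow_of_exponent_ge hb0 hb1 hΓ1
        _ = ((t:ℝ) + 1 + t₀) ^ Γ / ((t:ℝ) + 1 + 1 + t₀) ^ Γ :=
            Real.div_rpow hx0.le (by linarith : (0:ℝ) ≤ (t:ℝ) + 1 + 1 + t₀) Γ
    have key : (1 - H / ((t:ℝ) + 1 + t₀) * (1 - s)) * ((t:ℝ) + 1 + 1 + t₀) ^ Γ
        ≤ ((t:ℝ) + 1 + t₀) ^ Γ :=
      (le_div_iff₀ hB).mp (h1.trans h2)
    -- combine with ih
    have hfirst : (1 - H / ((t:ℝ) + 1 + t₀)) *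
        (∑ h ∈ Finset.Icc τ t,
          (H / ((h : ℝ) + t₀) * ∏ l ∈ Finset.Icc (h + 1) t, (1 - H / ((l : ℝ) + t₀)))
            * ((h : ℝ) + t₀) ^ (-Γ))
        ≤ (1 - H / ((t:ℝ) + 1 + t₀)) * (1 / (s * ((t:ℝ) + 1 + t₀) ^ Γ)) :=
      mul_le_mul_of_nonneg_left ih (by linarith)
    have htop : H / ((t:ℝ) + 1 + t₀) * ((t:ℝ) + 1 + t₀) ^ (-Γ)
        = H / ((t:ℝ) + 1 + t₀) * (((t:ℝ) + 1 + t₀) ^ Γ)⁻¹ := by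
      rw [Real.rpow_neg hx0.le]
    have hfin : (1 - H / ((t:ℝ) + 1 + t₀)) * (1 / (s * ((t:ℝ) + 1 + t₀) ^ Γ))
        + H / ((t:ℝ) + 1 + t₀) * (((t:ℝ) + 1 + t₀) ^ Γ)⁻¹
        ≤ 1 / (s * ((t:ℝ) + 1 + 1 + t₀) ^ Γ) := by
      have hLHS : (1 - H / ((t:ℝ) + 1 + t₀)) * (1 / (s * ((t:ℝ) + 1 + t₀) ^ Γ))
          + H / ((t:ℝ) + 1 + t₀) * (((t:ℝ) + 1 + t₀) ^ Γ)⁻¹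
          = (1 - H / ((t:ℝ) + 1 + t₀) * (1 - s)) / (s * ((t:ℝ) + 1 + t₀) ^ Γ) := by
        field_simp
        ring
      rw [hLHS, div_le_div_iff₀ (by positivity) (by positivity), one_mul,
        show (1 - H / ((t:ℝ) + 1 + t₀) * (1 - s)) * (s * ((t:ℝ) + 1 + 1 + t₀) ^ Γ)
          = s * ((1 - H / ((t:ℝ) + 1 + t₀) * (1 - s)) * ((t:ℝ) + 1 + 1 + t₀) ^ Γ) from by ring]
      exact mul_le_mul_of_nonneg_left key hs0.le
    calc (1 - H / ((t:ℝ) + 1 + t₀)) *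
        (∑ h ∈ Finset.Icc τ t,
          (H / ((h : ℝ) + t₀) * ∏ l ∈ Finset.Icc (h + 1) t, (1 - H / ((l : ℝ) + t₀)))
            * ((h : ℝ) + t₀) ^ (-Γ))
        + H / ((t:ℝ) + 1 + t₀) * ((t:ℝ) + 1 + t₀) ^ (-Γ)
        ≤ (1 - H / ((t:ℝ) + 1 + t₀)) * (1 / (s * ((t:ℝ) + 1 + t₀) ^ Γ))
          + H / ((t:ℝ) + 1 + t₀) * (((t:ℝ) + 1 + t₀) ^ Γ)⁻¹ := by
          rw [htop]; exact add_le_add_left hfirst _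
      _ ≤ 1 / (s * ((t:ℝ) + 1 + 1 + t₀) ^ Γ) := hfin
end

section
/- Let γ' ∈ (0,1), H(1 − √γ') ≥ 1, let τ ≥ 0 be an integer and t₀ ≥ max(2H, 1) a real, set α_l = H/(l + t₀), and define β̃_{h,t} = α_h ∏_{l=h+1}^{t}(1 − α_l) (empty product equal to 1). Let C, C' ≥ 0 and let (ξ_h) be nonnegative reals satisfying ξ_h ≤ C/√(h + t₀) + C'/(h + t₀) for all τ ≤ h ≤ t. Then γ' ∑_{h=τ}^{t} β̃_{h,t} ξ_h ≤ √γ' · ( C/√(t + 1 + t₀) + C'/(t + 1 + t₀) ). -/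
/-- `(1/2)·(1/√a) ≤ 1/√(a+1)` for `a ≥ 1`. -/
lemma comp1_sqrt (a : ℝ) (ha : 1 ≤ a) :
    (1/2) * (1 / Real.sqrt a) ≤ 1 / Real.sqrt (a+1) := by
  have ha0 : (0:ℝ) < a := by linarith
  have hs0 : 0 < Real.sqrt a := Real.sqrt_pos.mpr ha0
  have hu0 : 0 < Real.sqrt (a+1) := Real.sqrt_pos.mpr (by linarith)
  have hs : Real.sqrt a ^ 2 = a := Real.sq_sqrt ha0.le
  have hu : Real.sqrt (a+1) ^ 2 = a+1 := Real.sq_sqrt (by linarith)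
  have key : Real.sqrt (a+1) ≤ 2 * Real.sqrt a := by
    nlinarith [hs, hu, hs0, hu0]
  rw [mul_one_div, div_le_div_iff₀ hs0 hu0]
  nlinarith [key, hu0, hs0]

/-- `(1 - 1/a)·(1/√a) ≤ 1/√(a+1)` for `a ≥ 1`. -/
lemma comp2_sqrt (a : ℝ) (ha : 1 ≤ a) :
    (1 - 1/a) * (1 / Real.sqrt a) ≤ 1 / Real.sqrt (a+1) := by
  have ha0 : (0:ℝ) < a := by linarith
  have hs0 : 0 < Real.sqrt a := Real.sqrt_pos.mpr ha0
  have hu0 : 0 < Real.sqrt (a+1) := Real.sqrt_pos.mpr (by linarith)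
  have hs : Real.sqrt a ^ 2 = a := Real.sq_sqrt ha0.le
  have hu : Real.sqrt (a+1) ^ 2 = a+1 := Real.sq_sqrt (by linarith)
  have h1a : 0 ≤ 1 - 1/a := by
    have : 1/a ≤ 1 := by rw [div_le_one ha0]; linarith
    linarith
  have hsq : ((1 - 1/a) * Real.sqrt (a+1))^2 ≤ Real.sqrt a ^ 2 := by
    rw [mul_pow, hu, hs]
    have h1 : (1 - 1/a) = (a-1)/a := by field_simp
    rw [h1, div_pow, div_mul_eq_mul_div, div_le_iff₀ (by positivity)]
    nlinarith [sq_nonneg (a-1), sq_nonneg a, ha0]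
  have key : (1 - 1/a) * Real.sqrt (a+1) ≤ Real.sqrt a := by
    nlinarith [hsq, mul_nonneg h1a hu0.le, hs0]
  rw [mul_one_div, div_le_div_iff₀ hs0 hu0]
  linarith [key]

/-- `(1/2)·(1/a) ≤ 1/(a+1)` for `a ≥ 1`. -/
lemma comp1_lin (a : ℝ) (ha : 1 ≤ a) : (1/2) * (1 / a) ≤ 1 / (a+1) := by
  have ha0 : (0:ℝ) < a := by linarith
  rw [mul_one_div, div_le_div_iff₀ ha0 (by linarith)]
  nlinarith

/-- `(1 - 1/a)·(1/a) ≤ 1/(a+1)` for `a ≥ 1`. -/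
lemma comp2_lin (a : ℝ) (ha : 1 ≤ a) : (1 - 1/a) * (1 / a) ≤ 1 / (a+1) := by
  have ha0 : (0:ℝ) < a := by linarith
  have h1 : (1 - 1/a) = (a-1)/a := by field_simp
  rw [h1, div_mul_div_comm, mul_one, div_le_div_iff₀ (by positivity) (by linarith)]
  nlinarith

/-- Abstract Lemma 3 induction: for a nonnegative "step-decreasing" function `g`,
the weighted sums with weights `β̃_{h,t}` satisfy `∑ β̃_{h,t} g(h+t₀) ≤ K g(t+1+t₀)`. -/
lemma aux_sum (H t₀ K : ℝ) (g : ℝ → ℝ)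
    (hK : 1 ≤ K) (hHK : 1 ≤ H * (1 - 1/K))
    (ht₀ : max (2*H) 1 ≤ t₀)
    (hg0 : ∀ a : ℝ, 1 ≤ a → 0 ≤ g a)
    (hgbase : ∀ a : ℝ, 1 ≤ a → (1/2) * g a ≤ g (a+1))
    (hgstep : ∀ a : ℝ, 1 ≤ a → (1 - 1/a) * g a ≤ g (a+1))
    (τ : ℕ) :
    ∀ t : ℕ, τ ≤ t →
      ∑ h ∈ Finset.Icc τ t,
        ((H / ((h:ℝ) + t₀)) * ∏ l ∈ Finset.Icc (h+1) t, (1 - H / ((l:ℝ) + t₀))) * g ((h:ℝ) + t₀)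
        ≤ K * g ((t:ℝ) + 1 + t₀) := by
  have ht1 : (1:ℝ) ≤ t₀ := le_trans (le_max_right _ _) ht₀
  have ht2H : 2*H ≤ t₀ := le_trans (le_max_left _ _) ht₀
  have hKpos : (0:ℝ) < K := by linarith
  have h1K : 0 ≤ 1 - 1/K := by
    have : 1/K ≤ 1 := by rw [div_le_one hKpos]; linarith
    linarith
  have hHpos : 0 < H := by
    by_contra h
    push_neg at h
    nlinarith
  have hKH : K ≤ H * (K - 1) := by
    have h2 : 1 - 1/K = (K-1)/K := by field_simp
    rw [h2, ← mul_div_assoc] at hHK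
    have := (one_le_div hKpos).mp hHK
    linarith
  intro t ht
  induction t, ht using Nat.le_induction with
  | base =>
    have ha : (1:ℝ) ≤ (τ:ℝ) + t₀ := by
      have : (0:ℝ) ≤ (τ:ℝ) := Nat.cast_nonneg τ
      linarith
    have ha0 : (0:ℝ) < (τ:ℝ) + t₀ := by linarith
    have hα : H / ((τ:ℝ) + t₀) ≤ 1/2 := by
      rw [div_le_iff₀ ha0]
      have : (0:ℝ) ≤ (τ:ℝ) := Nat.cast_nonneg τ
      linarith
    rw [Finset.Icc_self, Finset.sum_singleton,
      Finset.Icc_eq_empty (by omega : ¬ τ + 1 ≤ τ), Finset.prod_empty, mul_one]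
    have h1 := hgbase _ ha
    have h2 := hg0 _ ha
    have h3 := hg0 ((τ:ℝ) + t₀ + 1) (by linarith)
    have h4 : H / ((τ:ℝ) + t₀) * g ((τ:ℝ) + t₀) ≤ (1/2) * g ((τ:ℝ) + t₀) :=
      mul_le_mul_of_nonneg_right hα h2
    have h5 : g ((τ:ℝ) + t₀ + 1) ≤ K * g ((τ:ℝ) + t₀ + 1) := by nlinarith
    have heq : (τ:ℝ) + 1 + t₀ = (τ:ℝ) + t₀ + 1 := by ring
    rw [heq]
    linarith
  | succ n hn ih =>
    have han : (1:ℝ) ≤ (n:ℝ) + 1 + t₀ := by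
      have : (0:ℝ) ≤ (n:ℝ) := Nat.cast_nonneg n
      linarith
    have han0 : (0:ℝ) < (n:ℝ) + 1 + t₀ := by linarith
    have hα : H / ((n:ℝ) + 1 + t₀) ≤ 1/2 := by
      rw [div_le_iff₀ han0]
      have : (0:ℝ) ≤ (n:ℝ) := Nat.cast_nonneg n
      linarith
    rw [Finset.sum_Icc_succ_top (by omega : τ ≤ n + 1)]
    have hcast : ((n+1:ℕ):ℝ) = (n:ℝ) + 1 := by push_cast; ring
    have hsum : ∑ h ∈ Finset.Icc τ n,
        ((H / ((h:ℝ) + t₀)) * ∏ l ∈ Finset.Icc (h+1) (n+1), (1 - H / ((l:ℝ) + t₀))) * g ((h:ℝ) + t₀)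
        = (1 - H / ((n:ℝ) + 1 + t₀)) * ∑ h ∈ Finset.Icc τ n,
            ((H / ((h:ℝ) + t₀)) * ∏ l ∈ Finset.Icc (h+1) n, (1 - H / ((l:ℝ) + t₀))) * g ((h:ℝ) + t₀) := by
      rw [Finset.mul_sum]
      apply Finset.sum_congr rfl
      intro h hh
      rw [Finset.mem_Icc] at hh
      rw [Finset.prod_Icc_succ_top (by omega : h + 1 ≤ n + 1), hcast]
      ring
    rw [hsum, Finset.Icc_eq_empty (by omega : ¬ (n+1) + 1 ≤ n + 1), Finset.prod_empty, mul_one,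
      hcast]
    set S := ∑ h ∈ Finset.Icc τ n,
        ((H / ((h:ℝ) + t₀)) * ∏ l ∈ Finset.Icc (h+1) n, (1 - H / ((l:ℝ) + t₀))) * g ((h:ℝ) + t₀)
      with hS
    have hIH : S ≤ K * g ((n:ℝ) + 1 + t₀) := ih
    set a := (n:ℝ) + 1 + t₀ with ha
    have heq : (n:ℝ) + 1 + 1 + t₀ = a + 1 := by rw [ha]; ring
    rw [heq]
    have hstep := hgstep a han
    have hga := hg0 a han
    have hA : (1 - H / a) * S ≤ (1 - H / a) * (K * g a) :=
      mul_le_mul_of_nonneg_left hIH (by linarith)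
    have hB : K * ((1 - 1/a) * g a) ≤ K * g (a+1) :=
      mul_le_mul_of_nonneg_left hstep hKpos.le
    have hC0 : K / a ≤ H / a * (K - 1) := by
      rw [div_mul_eq_mul_div]
      exact div_le_div_of_nonneg_right hKH han0.le
    have hC : (K / a) * g a ≤ (H / a * (K - 1)) * g a :=
      mul_le_mul_of_nonneg_right hC0 hga
    have e1 : (1 - H / a) * (K * g a) = K * g a - (H/a) * K * g a := by ring
    have e2 : K * ((1 - 1/a) * g a) = K * g a - (K / a) * g a := by
      field_simp
    have e3 : (H / a * (K - 1)) * g a = (H/a) * K * g a - (H/a) * g a := by ring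
    nlinarith [hA, hB, hC]

/-- Combination of Lemma 3 with exponents `Γ = 1/2` and `Γ = 1`:
if `ξ_h ≤ C/√(h+t₀) + C'/(h+t₀)` for `τ ≤ h ≤ t`, then the weighted sum
`γ' ∑_{h=τ}^{t} β̃_{h,t} ξ_h` is bounded by `√γ' (C/√(t+1+t₀) + C'/(t+1+t₀))`,
where `β̃_{h,t} = α_h ∏_{l=h+1}^{t} (1 - α_l)` and `α_l = H/(l+t₀)`. -/
theorem stmt_12 (γ' H t₀ C C' : ℝ) (τ : ℕ)
    (hγ' : γ' ∈ Set.Ioo (0 : ℝ) 1)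
    (hH : 1 ≤ H * (1 - Real.sqrt γ'))
    (ht₀ : max (2 * H) 1 ≤ t₀)
    (hC : 0 ≤ C) (hC' : 0 ≤ C')
    (t : ℕ) (ht : τ ≤ t)
    (ξ : ℕ → ℝ) (hξnn : ∀ h, τ ≤ h → h ≤ t → 0 ≤ ξ h)
    (hξ : ∀ h, τ ≤ h → h ≤ t →
      ξ h ≤ C / Real.sqrt ((h : ℝ) + t₀) + C' / ((h : ℝ) + t₀)) :
    γ' * ∑ h ∈ Finset.Icc τ t,
        ((H / ((h : ℝ) + t₀)) * ∏ l ∈ Finset.Icc (h + 1) t, (1 - H / ((l : ℝ) + t₀))) * ξ h ≤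
      Real.sqrt γ' *
        (C / Real.sqrt ((t : ℝ) + 1 + t₀) + C' / ((t : ℝ) + 1 + t₀)) := by
  obtain ⟨hγ0, hγ1⟩ := hγ'
  have hsγ0 : 0 < Real.sqrt γ' := Real.sqrt_pos.mpr hγ0
  have hsγ1 : Real.sqrt γ' < 1 := by
    rw [show (1:ℝ) = Real.sqrt 1 by simp]
    exact Real.sqrt_lt_sqrt hγ0.le hγ1
  set K := 1 / Real.sqrt γ' with hKdef
  have hK : 1 ≤ K := by
    rw [hKdef]
    rw [le_div_iff₀ hsγ0]
    linarith
  have hHK : 1 ≤ H * (1 - 1/K) := by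
    rw [hKdef, one_div_one_div]
    exact hH
  have ht1 : (1:ℝ) ≤ t₀ := le_trans (le_max_right _ _) ht₀
  have ht2H : 2*H ≤ t₀ := le_trans (le_max_left _ _) ht₀
  have hHpos : 0 < H := by nlinarith [hsγ1, hsγ0]
  -- the combined function g
  set g : ℝ → ℝ := fun a => C / Real.sqrt a + C' / a with hgdef
  have hg0 : ∀ a : ℝ, 1 ≤ a → 0 ≤ g a := by
    intro a ha
    have : 0 < Real.sqrt a := Real.sqrt_pos.mpr (by linarith)
    have ha0 : (0:ℝ) < a := by linarith
    rw [hgdef]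
    positivity
  have hgbase : ∀ a : ℝ, 1 ≤ a → (1/2) * g a ≤ g (a+1) := by
    intro a ha
    have h1 := mul_le_mul_of_nonneg_left (comp1_sqrt a ha) hC
    have h2 := mul_le_mul_of_nonneg_left (comp1_lin a ha) hC'
    simp only [hgdef]
    rw [div_eq_mul_one_div C, div_eq_mul_one_div C', div_eq_mul_one_div C (Real.sqrt (a+1)),
      div_eq_mul_one_div C' (a+1)]
    nlinarith [h1, h2]
  have hgstep : ∀ a : ℝ, 1 ≤ a → (1 - 1/a) * g a ≤ g (a+1) := by
    intro a ha
    have h1 := mul_le_mul_of_nonneg_left (comp2_sqrt a ha) hC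
    have h2 := mul_le_mul_of_nonneg_left (comp2_lin a ha) hC'
    simp only [hgdef]
    rw [div_eq_mul_one_div C, div_eq_mul_one_div C', div_eq_mul_one_div C (Real.sqrt (a+1)),
      div_eq_mul_one_div C' (a+1)]
    nlinarith [h1, h2]
  have haux := aux_sum H t₀ K g hK hHK ht₀ hg0 hgbase hgstep τ t ht
  -- weights are nonnegative
  have hβ : ∀ h ∈ Finset.Icc τ t,
      0 ≤ (H / ((h:ℝ) + t₀)) * ∏ l ∈ Finset.Icc (h+1) t, (1 - H / ((l:ℝ) + t₀)) := by
    intro h _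
    apply mul_nonneg
    · apply div_nonneg hHpos.le
      have : (0:ℝ) ≤ (h:ℝ) := Nat.cast_nonneg h
      linarith
    · apply Finset.prod_nonneg
      intro l _
      have hl0 : (0:ℝ) ≤ (l:ℝ) := Nat.cast_nonneg l
      have hla : (0:ℝ) < (l:ℝ) + t₀ := by linarith
      have : H / ((l:ℝ) + t₀) ≤ 1/2 := by
        rw [div_le_iff₀ hla]; linarith
      linarith
  -- termwise comparison
  have hsum_le : ∑ h ∈ Finset.Icc τ t,
        ((H / ((h:ℝ) + t₀)) * ∏ l ∈ Finset.Icc (h+1) t, (1 - H / ((l:ℝ) + t₀))) * ξ h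
      ≤ ∑ h ∈ Finset.Icc τ t,
        ((H / ((h:ℝ) + t₀)) * ∏ l ∈ Finset.Icc (h+1) t, (1 - H / ((l:ℝ) + t₀))) * g ((h:ℝ) + t₀) := by
    apply Finset.sum_le_sum
    intro h hh
    rw [Finset.mem_Icc] at hh
    exact mul_le_mul_of_nonneg_left (hξ h hh.1 hh.2) (hβ h (Finset.mem_Icc.mpr hh))
  have hchain : γ' * ∑ h ∈ Finset.Icc τ t,
        ((H / ((h:ℝ) + t₀)) * ∏ l ∈ Finset.Icc (h+1) t, (1 - H / ((l:ℝ) + t₀))) * ξ h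
      ≤ γ' * (K * g ((t:ℝ) + 1 + t₀)) := by
    apply mul_le_mul_of_nonneg_left (le_trans hsum_le haux) hγ0.le
  have hfinal : γ' * (K * g ((t:ℝ) + 1 + t₀)) = Real.sqrt γ' * g ((t:ℝ) + 1 + t₀) := by
    rw [← mul_assoc, hKdef, mul_one_div, Real.div_sqrt]
  rw [hfinal] at hchain
  exact hchain
end

section
/- Let d ≥ 1, let A and B be nonempty finite types, let w ≥ 1 and γ ∈ (0,1) be reals, let r ∈ ℝ, and let ψ, φ : A × B → ℝ^d be feature maps with ∑_{i=1}^{d} |ψ_i(a,b)| ≤ 1 and ∑_{i=1}^{d} |φ_i(a,b)| ≤ 1 for all (a,b) ∈ A × B. Define G : ℝ^d → ℝ by G(θ) = w·( r + γ · min_{a∈A} max_{b∈B} ⟨ψ(a,b), θ⟩ ) + (1 − w) · min_{a∈A} max_{b∈B} ⟨φ(a,b), θ⟩. Then for all θ₁, θ₂ ∈ ℝ^d: |G(θ₁) − G(θ₂)| ≤ (wγ + (w − 1)) · ‖θ₁ − θ₂‖_∞, where ⟨·,·⟩ is the standard inner product on ℝ^d and ‖x‖_∞ = max_i |x_i|.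 -/
private lemma abs_sup'_sub {B : Type*} (s : Finset B) (hs : s.Nonempty)
    (f g : B → ℝ) (c : ℝ) (h : ∀ b, |f b - g b| ≤ c) :
    |s.sup' hs f - s.sup' hs g| ≤ c := by
  rw [abs_sub_le_iff]
  constructor <;> rw [sub_le_iff_le_add] <;> apply Finset.sup'_le <;> intro b hb
  · have := (abs_sub_le_iff.mp (h b)).1
    have h2 := Finset.le_sup' g hb
    linarith
  · have := (abs_sub_le_iff.mp (h b)).2
    have h2 := Finset.le_sup' f hb
    linarith

private lemma abs_inf'_sub {A : Type*} (s : Finset A) (hs : s.Nonempty)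
    (f g : A → ℝ) (c : ℝ) (h : ∀ a, |f a - g a| ≤ c) :
    |s.inf' hs f - s.inf' hs g| ≤ c := by
  rw [abs_sub_le_iff]
  constructor <;> rw [sub_le_iff_le_add, ← sub_le_iff_le_add'] <;>
    apply Finset.le_inf' <;> intro a ha
  · have := (abs_sub_le_iff.mp (h a)).1
    have h2 : s.inf' hs f ≤ f a := Finset.inf'_le f ha
    linarith
  · have := (abs_sub_le_iff.mp (h a)).2
    have h2 : s.inf' hs g ≤ g a := Finset.inf'_le g ha
    linarith

/-- Lipschitz bound for the pointwise SOR minimax Bellman target: with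
`G(θ) = w (r + γ min_a max_b ⟨ψ(a,b), θ⟩) + (1-w) min_a max_b ⟨φ(a,b), θ⟩`,
one has `|G(θ₁) - G(θ₂)| ≤ (wγ + (w-1)) ‖θ₁ - θ₂‖_∞`, provided each feature
vector has `ℓ¹`-norm at most `1`. (`Fin d → ℝ` carries the sup norm.) -/
theorem stmt_16 (d : ℕ) (hd : 1 ≤ d)
    {A B : Type*} [Fintype A] [Fintype B] [Nonempty A] [Nonempty B]
    (w γ r : ℝ) (hw : 1 ≤ w) (hγ : γ ∈ Set.Ioo (0 : ℝ) 1)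
    (ψ φ : A × B → Fin d → ℝ)
    (hψ : ∀ p : A × B, ∑ i, |ψ p i| ≤ 1)
    (hφ : ∀ p : A × B, ∑ i, |φ p i| ≤ 1)
    (G : (Fin d → ℝ) → ℝ)
    (hG : ∀ θ : Fin d → ℝ,
      G θ = w * (r + γ * Finset.univ.inf' Finset.univ_nonempty
          (fun a : A => Finset.univ.sup' Finset.univ_nonempty
            (fun b : B => ∑ i, ψ (a, b) i * θ i)))
        + (1 - w) * Finset.univ.inf' Finset.univ_nonempty
          (fun a : A => Finset.univ.sup' Finset.univ_nonempty
            (fun b : B => ∑ i, φ (a, b) i * θ i))) :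
    ∀ θ₁ θ₂ : Fin d → ℝ,
      |G θ₁ - G θ₂| ≤ (w * γ + (w - 1)) * ‖θ₁ - θ₂‖ := by
  intro θ₁ θ₂
  obtain ⟨hγ0, hγ1⟩ := hγ
  have key : ∀ (χ : A × B → Fin d → ℝ), (∀ p, ∑ i, |χ p i| ≤ 1) →
      |Finset.univ.inf' Finset.univ_nonempty
          (fun a : A => Finset.univ.sup' Finset.univ_nonempty
            (fun b : B => ∑ i, χ (a, b) i * θ₁ i)) -
        Finset.univ.inf' Finset.univ_nonempty
          (fun a : A => Finset.univ.sup' Finset.univ_nonempty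
            (fun b : B => ∑ i, χ (a, b) i * θ₂ i))| ≤ ‖θ₁ - θ₂‖ := by
    intro χ hχ
    apply abs_inf'_sub; intro a
    apply abs_sup'_sub; intro b
    rw [← Finset.sum_sub_distrib]
    calc |∑ i, (χ (a,b) i * θ₁ i - χ (a,b) i * θ₂ i)|
        ≤ ∑ i, |χ (a,b) i * θ₁ i - χ (a,b) i * θ₂ i| := Finset.abs_sum_le_sum_abs _ _
      _ = ∑ i, |χ (a,b) i| * |θ₁ i - θ₂ i| := by
            congr 1; ext i; rw [← abs_mul]; ring_nf
      _ ≤ ∑ i, |χ (a,b) i| * ‖θ₁ - θ₂‖ := by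
            apply Finset.sum_le_sum; intro i _
            apply mul_le_mul_of_nonneg_left _ (abs_nonneg _)
            have := norm_le_pi_norm (θ₁ - θ₂) i
            simpa [Real.norm_eq_abs] using this
      _ = (∑ i, |χ (a,b) i|) * ‖θ₁ - θ₂‖ := (Finset.sum_mul _ _ _).symm
      _ ≤ 1 * ‖θ₁ - θ₂‖ := mul_le_mul_of_nonneg_right (hχ _) (norm_nonneg _)
      _ = ‖θ₁ - θ₂‖ := one_mul _
  have h1 := key ψ hψ
  have h2 := key φ hφ
  rw [hG θ₁, hG θ₂]
  set M1 := Finset.univ.inf' Finset.univ_nonempty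
          (fun a : A => Finset.univ.sup' Finset.univ_nonempty
            (fun b : B => ∑ i, ψ (a, b) i * θ₁ i))
  set M2 := Finset.univ.inf' Finset.univ_nonempty
          (fun a : A => Finset.univ.sup' Finset.univ_nonempty
            (fun b : B => ∑ i, ψ (a, b) i * θ₂ i))
  set N1 := Finset.univ.inf' Finset.univ_nonempty
          (fun a : A => Finset.univ.sup' Finset.univ_nonempty
            (fun b : B => ∑ i, φ (a, b) i * θ₁ i))
  set N2 := Finset.univ.inf' Finset.univ_nonempty
          (fun a : A => Finset.univ.sup' Finset.univ_nonempty
            (fun b : B => ∑ i, φ (a, b) i * θ₂ i))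
  have : w * (r + γ * M1) + (1 - w) * N1 - (w * (r + γ * M2) + (1 - w) * N2)
      = w * γ * (M1 - M2) + (1 - w) * (N1 - N2) := by ring
  rw [this]
  calc |w * γ * (M1 - M2) + (1 - w) * (N1 - N2)|
      ≤ |w * γ * (M1 - M2)| + |(1 - w) * (N1 - N2)| := abs_add_le _ _
    _ = w * γ * |M1 - M2| + (w - 1) * |N1 - N2| := by
        rw [abs_mul (w * γ), abs_mul (1 - w), abs_of_nonneg (by positivity : (0:ℝ) ≤ w * γ),
          abs_of_nonpos (by linarith : (1:ℝ) - w ≤ 0)]; ring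
    _ ≤ w * γ * ‖θ₁ - θ₂‖ + (w - 1) * ‖θ₁ - θ₂‖ := by
        have hwγ : (0:ℝ) ≤ w * γ := by positivity
        have hw1 : (0:ℝ) ≤ w - 1 := by linarith
        have := mul_le_mul_of_nonneg_left h1 hwγ
        have := mul_le_mul_of_nonneg_left h2 hw1
        linarith
    _ = (w * γ + (w - 1)) * ‖θ₁ - θ₂‖ := by ring
end
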